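/- Let U(ξ,w) = λ(w)·(‖w‖² - Im ξ) on the Siegel domain ℍⁿ = {(ξ,w) ∈ ℂ×ℂⁿ⁻¹ : Im ξ > ‖w‖²}, where λ : ℂⁿ⁻¹ → (0,∞) is a C² function. If U is plurisubharmonic on ℍⁿ and harmonic on every complex geodesic of the form ζ ↦ (i(1+ζ)/(1-ζ) + tμ + it²‖V‖², tV) (t ∈ ℝ, μ ∈ ℝ, V ∈ ℂⁿ⁻¹), then λ is constant. -/

import Mathlib

open Metric Filter Set Topology

/-- Sub-mean value inequality on circles contained (with their discs) in `S`. -/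
def SubmeanOn (u : ℂ → ℝ) (S : Set ℂ) : Prop :=
  ∀ z : ℂ, ∀ r : ℝ, 0 < r → closedBall z r ⊆ S →
    u z ≤ (2 * Real.pi)⁻¹ * ∫ θ in (0:ℝ)..(2 * Real.pi),
      u (z + (r : ℂ) * Complex.exp (θ * Complex.I))

/-- `u` is subharmonic on `S`: upper semicontinuous and satisfying the sub-mean value
inequality on discs. -/
def SubharmonicOn (u : ℂ → ℝ) (S : Set ℂ) : Prop :=
  UpperSemicontinuousOn u S ∧ SubmeanOn u S

/-- `u` is harmonic on `S ⊆ ℂ` : locally it is the real part of a holomorphic function. -/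
def HarmonicOnSet (u : ℂ → ℝ) (S : Set ℂ) : Prop :=
  ∀ z ∈ S, ∃ (f : ℂ → ℂ) (r : ℝ), 0 < r ∧ ball z r ⊆ S ∧
    DifferentiableOn ℂ f (ball z r) ∧ ∀ w ∈ ball z r, u w = (f w).re

/-- `u` is plurisubharmonic on `D`: upper semicontinuous and subharmonic on every
complex line. -/
def PshOn {F : Type*} [NormedAddCommGroup F] [NormedSpace ℂ F]
    (u : F → ℝ) (D : Set F) : Prop :=
  UpperSemicontinuousOn u D ∧
  ∀ a b : F, SubharmonicOn (fun ζ : ℂ => u (a + ζ • b)) {ζ : ℂ | a + ζ • b ∈ D}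

/-- The Siegel upper half-space `ℍⁿ = {(ξ,w) : Im ξ > ‖w‖²}`. -/
def siegel (m : ℕ) : Set (ℂ × EuclideanSpace ℂ (Fin m)) :=
  {p | ‖p.2‖ ^ 2 < p.1.im}

lemma aux_div (x K : ℝ) (h : ∀ s : ℝ, 0 < s → x ≤ K / s) : x ≤ 0 := by
  by_contra h'
  push_neg at h'
  have hK : 0 < K := lt_of_lt_of_le h' (by simpa using h 1 one_pos)
  have h2 := h (2 * K / x) (by positivity)
  have h3 : K / (2 * K / x) = x / 2 := by field_simp
  rw [h3] at h2; linarith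

lemma aux_lin (x C : ℝ) (h : ∀ r : ℝ, 0 < r → r ≤ 1 → x ≤ C * r) : x ≤ 0 := by
  by_contra h'
  push_neg at h'
  have hC : 0 < C := by nlinarith [h 1 one_pos le_rfl]
  have h2 := h (min 1 (x / (2 * C))) (lt_min one_pos (by positivity)) (min_le_left _ _)
  have h3 : C * min 1 (x / (2 * C)) ≤ C * (x / (2 * C)) :=
    mul_le_mul_of_nonneg_left (min_le_right _ _) hC.le
  have h4 : C * (x / (2 * C)) = x / 2 := by field_simp
  linarith

lemma taylor_bound (g : ℂ → ℝ) (hg : ContDiff ℝ 2 g) :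
    ∃ L : ℝ, 0 ≤ L ∧ ∀ ζ : ℂ, ‖ζ‖ ≤ 1 →
      |g ζ - g 0 - fderiv ℝ g 0 ζ| ≤ L * ‖ζ‖ ^ 2 := by
  have hgd : Differentiable ℝ g := hg.differentiable (by norm_num)
  have hfd : ContDiff ℝ 1 (fderiv ℝ g) := hg.fderiv_right (by norm_num)
  obtain ⟨L₀, hL₀⟩ := (isCompact_closedBall (0:ℂ) 1).exists_bound_of_continuousOn
    ((hfd.continuous_fderiv (by norm_num)).continuousOn (s := closedBall 0 1))
  set L : ℝ := max L₀ 0 with hLdef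
  refine ⟨L, le_max_right _ _, fun ζ hζ => ?_⟩
  have hlip : ∀ x ∈ closedBall (0:ℂ) 1, ‖fderiv ℝ g x - fderiv ℝ g 0‖ ≤ L * ‖x‖ := by
    intro x hx
    have := (convex_closedBall (0:ℂ) 1).norm_image_sub_le_of_norm_fderiv_le
      (C := L) (fun y _ => (hfd.differentiable (by norm_num)) y)
      (fun y hy => le_trans (hL₀ y hy) (le_max_left _ _))
      (mem_closedBall_self zero_le_one) hx
    simpa using this
  set D := fderiv ℝ g 0 with hD
  set f : ℂ → ℝ := fun w => g w - D w with hf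
  have hfdiff : ∀ x : ℂ, DifferentiableAt ℝ f x := fun x => (hgd x).sub (D.differentiableAt)
  have hfder : ∀ x : ℂ, fderiv ℝ f x = fderiv ℝ g x - D := by
    intro x
    rw [hf]
    rw [fderiv_fun_sub (hgd x) D.differentiableAt, D.fderiv]
  have key := (convex_closedBall (0:ℂ) ‖ζ‖).norm_image_sub_le_of_norm_fderiv_le
    (fun y _ => hfdiff y)
    (C := L * ‖ζ‖)
    (fun y hy => by
      rw [hfder]
      have hy1 : y ∈ closedBall (0:ℂ) 1 :=
        closedBall_subset_closedBall hζ hy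
      have := hlip y hy1
      have hyn : ‖y‖ ≤ ‖ζ‖ := by simpa using hy
      nlinarith [norm_nonneg y, le_max_right L₀ 0])
    (mem_closedBall_self (norm_nonneg ζ)) (mem_closedBall_zero_iff.mpr le_rfl)
  have hf0 : f 0 = g 0 := by simp [hf]
  have h5 : |f ζ - f 0| ≤ L * ‖ζ‖ * ‖ζ‖ := by
    simpa [Real.norm_eq_abs] using key
  calc |g ζ - g 0 - D ζ| = |f ζ - f 0| := by rw [hf0]; simp only [hf]; ring_nf
    _ ≤ L * ‖ζ‖ * ‖ζ‖ := h5
    _ = L * ‖ζ‖ ^ 2 := by ring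

set_option maxHeartbeats 2000000 in
lemma key_deriv (m : ℕ) (lam : EuclideanSpace ℂ (Fin m) → ℝ) (hC2 : ContDiff ℝ 2 lam)
    (U : ℂ × EuclideanSpace ℂ (Fin m) → ℝ)
    (hU : ∀ p, U p = lam p.2 * (‖p.2‖ ^ 2 - p.1.im))
    (hpsh : PshOn U (siegel m)) (w₀ v : EuclideanSpace ℂ (Fin m)) :
    fderiv ℝ lam w₀ v = 0 := by
  classical
  have hπ : (0:ℝ) < Real.pi := Real.pi_pos
  set Lv : ℂ →L[ℝ] EuclideanSpace ℂ (Fin m) :=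
    (((ContinuousLinearMap.id ℂ ℂ).smulRight v).restrictScalars ℝ) with hLv
  have hLvapp : ∀ ζ : ℂ, Lv ζ = ζ • v := fun ζ => rfl
  set φ : ℂ → EuclideanSpace ℂ (Fin m) := fun ζ => w₀ + ζ • v with hφ
  have hφder : ∀ ζ : ℂ, HasFDerivAt φ Lv ζ := by
    intro ζ
    have h1 : HasFDerivAt (fun ζ : ℂ => ζ • v) Lv ζ := Lv.hasFDerivAt
    exact h1.const_add w₀
  set g : ℂ → ℝ := fun ζ => lam (φ ζ) with hgdef
  have hg : ContDiff ℝ 2 g := hC2.comp ((contDiff_const (c := w₀)).add Lv.contDiff)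
  have hgc : Continuous g := hg.continuous
  set D := fderiv ℝ g 0 with hD
  have hDcomp : D = (fderiv ℝ lam w₀).comp Lv := by
    have h0 : φ 0 = w₀ := by simp [hφ]
    have hlam : HasFDerivAt lam (fderiv ℝ lam w₀) (φ 0) := by
      rw [h0]; exact (hC2.differentiable (by norm_num) w₀).hasFDerivAt
    exact (hlam.comp 0 (hφder 0)).fderiv
  have hDv : D 1 = fderiv ℝ lam w₀ v := by
    rw [hDcomp]; simp [hLvapp]
  obtain ⟨L, hL0, hTay⟩ := taylor_bound g hg
  set a := D 1 with ha
  set b := D Complex.I with hb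
  suffices hA : a = 0 by rw [← hDv]; exact hA
  -- circle decomposition
  have hcirc : ∀ r θ : ℝ, (r:ℂ) * Complex.exp (θ * Complex.I)
      = (r * Real.cos θ) • (1:ℂ) + (r * Real.sin θ) • Complex.I := by
    intro r θ
    apply Complex.ext <;>
      simp [Complex.exp_ofReal_mul_I_re, Complex.exp_ofReal_mul_I_im, Complex.real_smul,
        Complex.mul_re, Complex.mul_im, Complex.cos_ofReal_re, Complex.sin_ofReal_re]
  have hDexp : ∀ r θ : ℝ, D ((r:ℂ) * Complex.exp (θ * Complex.I))
      = r * Real.cos θ * a + r * Real.sin θ * b := by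
    intro r θ
    rw [hcirc, map_add, map_smul, map_smul]
    simp [ha, hb, smul_eq_mul]
  have hnormc : ∀ r θ : ℝ, ‖(r:ℂ) * Complex.exp (θ * Complex.I)‖ = |r| := by
    intro r θ
    simp [map_mul, Complex.norm_exp_ofReal_mul_I, Complex.norm_real]
  -- main quantitative bound
  have main : ∀ r : ℝ, 0 < r → r ≤ 1 → |a| ≤ 4 * L * r := by
    intro r hr hr1
    set ω : ℝ → ℂ := fun θ => (r:ℂ) * Complex.exp (θ * Complex.I) with hω
    have hωc : Continuous ω := by fun_prop
    set G : ℝ → ℝ := fun θ => g (ω θ) with hG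
    have hGc : Continuous G := hgc.comp hωc
    set Q : ℂ → ℝ := fun ζ => ‖w₀ + ζ • v‖ ^ 2 with hQ
    have hQc : Continuous Q := by fun_prop
    set QQ : ℝ → ℝ := fun θ => Q (ω θ) with hQQ
    have hQQc : Continuous QQ := hQc.comp hωc
    have int : ∀ f : ℝ → ℝ, Continuous f →
        IntervalIntegrable f MeasureTheory.volume 0 (2*Real.pi) :=
      fun f hf => hf.intervalIntegrable _ _
    set IG := ∫ θ in (0:ℝ)..(2*Real.pi), G θ with hIG
    set IGQ := ∫ θ in (0:ℝ)..(2*Real.pi), G θ * QQ θ with hIGQ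
    set J := ∫ θ in (0:ℝ)..(2*Real.pi), G θ * Real.cos θ with hJ
    set M : ℝ := (‖w₀‖ + r*‖v‖)^2 with hM
    -- the psh inequality for each ε, s
    have step : ∀ ε s : ℝ, ε = 1 ∨ ε = -1 → 0 < s →
        2 * Real.pi * (g 0 * (Q 0 - (M + s*r + 1)))
          ≤ IGQ - (M + s*r + 1) * IG - ε * s * r * J := by
      intro ε s hεcase hs
      have hε1 : |ε| = 1 := by rcases hεcase with h | h <;> simp [h]
      set c : ℝ := M + s*r + 1 with hc
      set A : ℂ × EuclideanSpace ℂ (Fin m) := (Complex.I * (c:ℝ), w₀) with hA'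
      set B : ℂ × EuclideanSpace ℂ (Fin m) := (((ε*s:ℝ):ℂ) * Complex.I, v) with hB'
      have him : ∀ ζ : ℂ, (A + ζ • B).1.im = c + ε*s*ζ.re := by
        intro ζ
        have : (A + ζ • B).1 = Complex.I * (c:ℝ) + ζ * (((ε*s:ℝ):ℂ) * Complex.I) := by
          simp [hA', hB', Prod.smul_fst, smul_eq_mul]
        rw [this]
        simp [Complex.add_im, Complex.mul_im, Complex.mul_re]
        ring
      have hsnd : ∀ ζ : ℂ, (A + ζ • B).2 = w₀ + ζ • v := by
        intro ζ; simp [hA', hB', Prod.smul_snd]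
      have huval : ∀ ζ : ℂ, U (A + ζ • B) = g ζ * (Q ζ - (c + ε*s*ζ.re)) := by
        intro ζ
        rw [hU, him, hsnd]
      have hmem : closedBall (0:ℂ) r ⊆ {ζ : ℂ | A + ζ • B ∈ siegel m} := by
        intro ζ hζ
        have hζn : ‖ζ‖ ≤ r := by simpa [dist_zero_right] using hζ
        have hQb : Q ζ ≤ M := by
          have h1 : ‖w₀ + ζ • v‖ ≤ ‖w₀‖ + r*‖v‖ := by
            refine (norm_add_le _ _).trans ?_
            rw [norm_smul]
            have : ‖ζ‖ * ‖v‖ ≤ r * ‖v‖ := mul_le_mul_of_nonneg_right hζn (norm_nonneg v)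
            linarith
          have h0 : (0:ℝ) ≤ ‖w₀ + ζ • v‖ := norm_nonneg _
          show ‖w₀ + ζ • v‖ ^ 2 ≤ (‖w₀‖ + r*‖v‖)^2
          nlinarith
        have hrebound : |ε*s*ζ.re| ≤ s*r := by
          rw [abs_mul, abs_mul, hε1, one_mul, abs_of_pos hs]
          have := (Complex.abs_re_le_norm ζ).trans hζn
          exact mul_le_mul_of_nonneg_left this hs.le
        show ‖(A + ζ • B).2‖ ^ 2 < (A + ζ • B).1.im
        rw [him, hsnd]
        have : ‖w₀ + ζ • v‖^2 = Q ζ := rfl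
        rw [this]
        have := abs_le.1 hrebound
        rw [hc]
        linarith [hQb]
      have hsub := (hpsh.2 A B).2 0 r hr hmem
      have hLHS : U (A + (0:ℂ) • B) = g 0 * (Q 0 - c) := by
        rw [huval]; simp
      have hre : ∀ θ : ℝ, (ω θ).re = r * Real.cos θ := by
        intro θ
        rw [hω]
        simp [Complex.mul_re, Complex.exp_ofReal_mul_I_re, Complex.exp_ofReal_mul_I_im]
      have hintg : ∀ θ : ℝ, U (A + ((0:ℂ) + ω θ) • B)
          = G θ * QQ θ - c * G θ - ε * s * r * (G θ * Real.cos θ) := by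
        intro θ
        rw [zero_add, huval, hre]
        simp only [hG, hQQ]
        ring
      have hint : (∫ θ in (0:ℝ)..(2*Real.pi), U (A + ((0:ℂ) + ω θ) • B))
          = IGQ - c * IG - ε*s*r * J := by
        rw [intervalIntegral.integral_congr (g := fun θ =>
          G θ * QQ θ - c * G θ - ε * s * r * (G θ * Real.cos θ)) (fun θ _ => hintg θ)]
        rw [intervalIntegral.integral_sub (((int (fun θ => G θ * QQ θ) (hGc.mul hQQc)).sub
            ((int _ hGc).const_mul c))) ((int (fun θ => G θ * Real.cos θ) (hGc.mul Real.continuous_cos)).const_mul _),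
          intervalIntegral.integral_sub (int (fun θ => G θ * QQ θ) (hGc.mul hQQc)) ((int _ hGc).const_mul c),
          intervalIntegral.integral_const_mul, intervalIntegral.integral_const_mul]
      have h2π : (0:ℝ) < 2*Real.pi := by positivity
      have hsub2 : g 0 * (Q 0 - c) ≤ (2*Real.pi)⁻¹ * (IGQ - c * IG - ε*s*r * J) := by
        have := hsub
        simp only at this
        rw [hLHS] at this
        rw [← hint]
        exact this
      have := mul_le_mul_of_nonneg_left hsub2 h2π.le
      rw [mul_inv_cancel_left₀ (ne_of_gt h2π)] at this
      calc 2 * Real.pi * (g 0 * (Q 0 - (M + s*r + 1)))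
          = 2 * Real.pi * (g 0 * (Q 0 - c)) := by rw [hc]
        _ ≤ IGQ - c * IG - ε*s*r * J := this
        _ = IGQ - (M + s*r + 1) * IG - ε * s * r * J := by rw [hc]
    -- pass to the limit s → ∞
    have limstep : ∀ ε : ℝ, ε = 1 ∨ ε = -1 → ε * J ≤ 2*Real.pi*(g 0) - IG := by
      intro ε hεcase
      have hdiv : ∀ s : ℝ, 0 < s → r * (ε * J + IG - 2*Real.pi*(g 0)) ≤
          (IGQ - 2*Real.pi*(g 0)*(Q 0) - (M+1)*(IG - 2*Real.pi*(g 0))) / s := by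
        intro s hs
        have h1 := step ε s hεcase hs
        rw [le_div_iff₀ hs]
        nlinarith [h1]
      have h0 := aux_div _ _ hdiv
      nlinarith [h0, hr]
    -- Taylor comparison function
    set Φ : ℝ → ℝ := fun θ => g 0 + r*a*Real.cos θ + r*b*Real.sin θ with hΦ
    have hΦc : Continuous Φ := by fun_prop
    have hGΦ : ∀ θ : ℝ, |G θ - Φ θ| ≤ L * r^2 := by
      intro θ
      have hn : ‖ω θ‖ = r := by rw [hω, hnormc, abs_of_pos hr]
      have h1 := hTay (ω θ) (by rw [hn]; exact hr1)
      rw [hn] at h1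
      have h2 : G θ - Φ θ = g (ω θ) - g 0 - D (ω θ) := by
        rw [hω] at *
        rw [hDexp r θ]
        simp only [hG, hΦ, hω]
        ring
      rw [h2]
      exact h1
    have hIΦ : (∫ θ in (0:ℝ)..(2*Real.pi), Φ θ) = 2*Real.pi*(g 0) := by
      simp only [hΦ]
      rw [intervalIntegral.integral_add (((intervalIntegrable_const).add
          ((int _ Real.continuous_cos).const_mul _))) ((int _ Real.continuous_sin).const_mul _),
        intervalIntegral.integral_add (intervalIntegrable_const)
          ((int _ Real.continuous_cos).const_mul _),
        intervalIntegral.integral_const_mul, intervalIntegral.integral_const_mul,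
        intervalIntegral.integral_const, integral_cos, integral_sin]
      simp [Real.sin_two_pi, Real.cos_two_pi]
    have hIΦcos : (∫ θ in (0:ℝ)..(2*Real.pi), Φ θ * Real.cos θ) = r*a*Real.pi := by
      have heq : ∀ θ : ℝ, Φ θ * Real.cos θ
          = g 0 * Real.cos θ + r*a*(Real.cos θ^2) + r*b*(Real.sin θ * Real.cos θ) := by
        intro θ; simp only [hΦ]; ring
      rw [intervalIntegral.integral_congr (fun θ _ => heq θ)]
      rw [intervalIntegral.integral_add
          ((((int _ Real.continuous_cos).const_mul _)).add
            ((int (fun θ => Real.cos θ ^ 2) (by fun_prop)).const_mul _))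
          ((int (fun θ => Real.sin θ * Real.cos θ) (Real.continuous_sin.mul Real.continuous_cos)).const_mul _),
        intervalIntegral.integral_add ((int _ Real.continuous_cos).const_mul _)
          ((int _ (by fun_prop : Continuous fun θ : ℝ => Real.cos θ ^ 2)).const_mul _),
        intervalIntegral.integral_const_mul, intervalIntegral.integral_const_mul,
        intervalIntegral.integral_const_mul,
        integral_cos, integral_cos_sq, integral_sin_mul_cos₁]
      norm_num [Real.sin_two_pi, Real.cos_two_pi]
    have hIGest : |IG - 2*Real.pi*(g 0)| ≤ 2*Real.pi*(L*r^2) := by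
      have h1 : IG - 2*Real.pi*(g 0) = ∫ θ in (0:ℝ)..(2*Real.pi), (G θ - Φ θ) := by
        rw [intervalIntegral.integral_sub (int _ hGc) (int _ hΦc), ← hIΦ, hIG]
      rw [h1]
      have h2 := intervalIntegral.norm_integral_le_of_norm_le_const
        (C := L*r^2) (f := fun θ => G θ - Φ θ) (a := (0:ℝ)) (b := 2*Real.pi)
        (fun θ _ => by rw [Real.norm_eq_abs]; exact hGΦ θ)
      rw [Real.norm_eq_abs] at h2
      calc |∫ θ in (0:ℝ)..(2*Real.pi), (G θ - Φ θ)| ≤ L*r^2 * |2*Real.pi - 0| := h2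
        _ = 2*Real.pi*(L*r^2) := by rw [sub_zero, abs_of_pos (by positivity)]; ring
    have hJest : |J - r*a*Real.pi| ≤ 2*Real.pi*(L*r^2) := by
      have h1 : J - r*a*Real.pi = ∫ θ in (0:ℝ)..(2*Real.pi), (G θ - Φ θ) * Real.cos θ := by
        have : ∀ θ : ℝ, (G θ - Φ θ) * Real.cos θ = G θ * Real.cos θ - Φ θ * Real.cos θ := by
          intro θ; ring
        rw [intervalIntegral.integral_congr (fun θ _ => this θ),
          intervalIntegral.integral_sub (int (fun θ => G θ * Real.cos θ) (hGc.mul Real.continuous_cos))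
            (int (fun θ => Φ θ * Real.cos θ) (hΦc.mul Real.continuous_cos)), ← hIΦcos, hJ]
      rw [h1]
      have h2 := intervalIntegral.norm_integral_le_of_norm_le_const
        (C := L*r^2) (f := fun θ => (G θ - Φ θ) * Real.cos θ) (a := (0:ℝ)) (b := 2*Real.pi)
        (fun θ _ => by
          rw [Real.norm_eq_abs, abs_mul]
          calc |G θ - Φ θ| * |Real.cos θ| ≤ (L*r^2) * 1 :=
            mul_le_mul (hGΦ θ) (Real.abs_cos_le_one θ) (abs_nonneg _) (by positivity)
          _ = L*r^2 := by ring)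
      rw [Real.norm_eq_abs] at h2
      calc |∫ θ in (0:ℝ)..(2*Real.pi), (G θ - Φ θ) * Real.cos θ|
          ≤ L*r^2 * |2*Real.pi - 0| := h2
        _ = 2*Real.pi*(L*r^2) := by rw [sub_zero, abs_of_pos (by positivity)]; ring
    -- combine
    have hJ1 := limstep 1 (Or.inl rfl)
    have hJ2 := limstep (-1) (Or.inr rfl)
    rw [one_mul] at hJ1
    rw [neg_one_mul] at hJ2
    have hJabs : |J| ≤ 2*Real.pi*(L*r^2) := by
      have : 2*Real.pi*(g 0) - IG ≤ |IG - 2*Real.pi*(g 0)| := by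
        rw [abs_sub_comm]; exact le_abs_self _
      rw [abs_le]
      constructor <;> linarith [hIGest, this]
    have hfin : r * |a| * Real.pi ≤ 4*Real.pi*(L*r^2) := by
      have h1 : |r*a*Real.pi| ≤ |J| + |J - r*a*Real.pi| := by
        calc |r*a*Real.pi| = |J - (J - r*a*Real.pi)| := by ring_nf
          _ ≤ |J| + |J - r*a*Real.pi| := abs_sub _ _
      have h2 : |r*a*Real.pi| = r * |a| * Real.pi := by
        rw [abs_mul, abs_mul, abs_of_pos hr, abs_of_pos hπ]
      rw [h2] at h1
      linarith [hJabs, hJest]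
    calc |a| = (r * |a| * Real.pi)/(r*Real.pi) := by field_simp
      _ ≤ (4*Real.pi*(L*r^2))/(r*Real.pi) := (div_le_div_iff_of_pos_right (by positivity)).mpr hfin
      _ = 4*L*r := by field_simp
  have := aux_lin |a| (4*L) (fun r hr hr1 => by
    have := main r hr hr1; linarith)
  have h0 : |a| = 0 := le_antisymm this (abs_nonneg a)
  exact abs_eq_zero.mp h0

/-- If `U(ξ,w) = λ(w)(‖w‖² - Im ξ)` with `λ` a positive `C²` function is plurisubharmonic
on the Siegel domain and harmonic on every complex geodesic
`ζ ↦ (i(1+ζ)/(1-ζ) + tμ + it²‖V‖², tV)`, then `λ` is constant. -/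
theorem stmt8 (m : ℕ) (lam : EuclideanSpace ℂ (Fin m) → ℝ)
    (hC2 : ContDiff ℝ 2 lam) (hpos : ∀ w, 0 < lam w)
    (U : ℂ × EuclideanSpace ℂ (Fin m) → ℝ)
    (hU : ∀ p, U p = lam p.2 * (‖p.2‖ ^ 2 - p.1.im))
    (hpsh : PshOn U (siegel m))
    (hharm : ∀ (t μ : ℝ) (V : EuclideanSpace ℂ (Fin m)),
      HarmonicOnSet (fun ζ : ℂ =>
        U (Complex.I * (1 + ζ) / (1 - ζ) + ((t * μ : ℝ) : ℂ)
            + Complex.I * (((t ^ 2 * ‖V‖ ^ 2 : ℝ)) : ℂ), t • V))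
        (ball (0:ℂ) 1)) :
    ∀ w w' : EuclideanSpace ℂ (Fin m), lam w = lam w' := by
  intro w w'
  have hd : Differentiable ℝ lam := hC2.differentiable (by norm_num)
  exact is_const_of_fderiv_eq_zero hd (fun x => ContinuousLinearMap.ext fun v => by
    simpa using key_deriv m lam hC2 U hU hpsh x v) w w'
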